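/- arXiv:1412.4457 — 5 statements merged into one kernel-verified Lean document; each statement's English description precedes it below -/
import Mathlib

section
/- Let S ⊆ ℝ be a Borel set and let z, w ∈ ℂ with Im z > 0 and Im w > 0. Then |θ(S,z) − θ(S,w)| ≤ (π/2)·|z−w|·(1/Im z + 1/Im w). -/
open MeasureTheory Real Complex Set

lemma poisson_integrable (a b : ℝ) (hb : 0 < b) :
    Integrable (fun t : ℝ => ((t - a) ^ 2 + b ^ 2)⁻¹) := by
  have h1 : Integrable (fun t : ℝ => (1 + t ^ 2)⁻¹) := integrable_inv_one_add_sq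
  have h2 := (h1.comp_div (ne_of_gt hb)).const_mul (b ^ 2)⁻¹
  have h3 := h2.comp_sub_right (G := ℝ) a
  convert h3 using 2 with t
  field_simp
  ring

lemma poisson_integral (a b : ℝ) (hb : 0 < b) :
    ∫ t : ℝ, ((t - a) ^ 2 + b ^ 2)⁻¹ = π / b := by
  have h1 : (fun t : ℝ => ((t - a) ^ 2 + b ^ 2)⁻¹)
      = fun t : ℝ => (b ^ 2)⁻¹ * (1 + ((t - a) / b) ^ 2)⁻¹ := by
    funext t; field_simp; ring
  rw [h1, MeasureTheory.integral_const_mul]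
  have h2 : ∫ t : ℝ, (1 + ((t - a) / b) ^ 2)⁻¹ = |b| * π := by
    rw [integral_sub_right_eq_self (μ := volume) (fun t : ℝ => (1 + (t / b) ^ 2)⁻¹) a,
      MeasureTheory.Measure.integral_comp_div (fun t : ℝ => (1 + t ^ 2)⁻¹) b,
      integral_univ_inv_one_add_sq, smul_eq_mul]
  rw [h2, abs_of_pos hb]
  field_simp

lemma im_one_div' (z : ℂ) (t : ℝ) :
    ((1 : ℂ) / ((t : ℂ) - z)).im = z.im / ((t - z.re) ^ 2 + z.im ^ 2) := by
  rw [one_div, Complex.inv_im]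
  simp [Complex.normSq_apply, Complex.sub_im, Complex.sub_re]
  ring_nf

/-- The angle subtended by a Borel set `S ⊆ ℝ` at a point `z` in the upper
half-plane: `θ(S,z) = ∫_S Im (1/(t - z)) dt`. -/
noncomputable def subtendedAngle (S : Set ℝ) (z : ℂ) : ℝ :=
  ∫ t in S, ((1 : ℂ) / ((t : ℂ) - z)).im

theorem abs_subtendedAngle_sub_le (S : Set ℝ) (hS : MeasurableSet S)
    (z w : ℂ) (hz : 0 < z.im) (hw : 0 < w.im) :
    |subtendedAngle S z - subtendedAngle S w| ≤
      (π / 2) * ‖z - w‖ * (1 / z.im + 1 / w.im) := by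
  set C := ‖z - w‖ with hC
  have hC0 : 0 ≤ C := norm_nonneg _
  have hiz : IntegrableOn (fun t : ℝ => ((1 : ℂ) / ((t : ℂ) - z)).im) S := by
    have := ((poisson_integrable z.re z.im hz).const_mul z.im).integrableOn (s := S)
    refine this.congr_fun (fun t _ => ?_) hS
    rw [im_one_div']; ring
  have hiw : IntegrableOn (fun t : ℝ => ((1 : ℂ) / ((t : ℂ) - w)).im) S := by
    have := ((poisson_integrable w.re w.im hw).const_mul w.im).integrableOn (s := S)
    refine this.congr_fun (fun t _ => ?_) hS
    rw [im_one_div']; ring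
  have hsub : subtendedAngle S z - subtendedAngle S w
      = ∫ t in S, (((1 : ℂ) / ((t : ℂ) - z)).im - ((1 : ℂ) / ((t : ℂ) - w)).im) := by
    rw [subtendedAngle, subtendedAngle, ← integral_sub hiz hiw]
  set g : ℝ → ℝ := fun t =>
    C / 2 * (((t - z.re) ^ 2 + z.im ^ 2)⁻¹ + ((t - w.re) ^ 2 + w.im ^ 2)⁻¹) with hg
  have hgint : Integrable g :=
    (((poisson_integrable z.re z.im hz).add (poisson_integrable w.re w.im hw)).const_mul (C / 2))
  have hbound : ∀ t : ℝ,
      |((1 : ℂ) / ((t : ℂ) - z)).im - ((1 : ℂ) / ((t : ℂ) - w)).im| ≤ g t := by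
    intro t
    have hznz : (t : ℂ) - z ≠ 0 := by
      intro h
      have : z.im = 0 := by
        have := congrArg Complex.im h
        simpa using this.symm
      linarith
    have hwnz : (t : ℂ) - w ≠ 0 := by
      intro h
      have : w.im = 0 := by
        have := congrArg Complex.im h
        simpa using this.symm
      linarith
    have key : (1 : ℂ) / ((t : ℂ) - z) - 1 / ((t : ℂ) - w)
        = (z - w) / (((t : ℂ) - z) * ((t : ℂ) - w)) := by
      field_simp
      ring
    set x := ‖(t : ℂ) - z‖ with hx
    set y := ‖(t : ℂ) - w‖ with hy
    have hx0 : 0 < x := norm_pos_iff.mpr hznz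
    have hy0 : 0 < y := norm_pos_iff.mpr hwnz
    have h1 : |((1 : ℂ) / ((t : ℂ) - z)).im - ((1 : ℂ) / ((t : ℂ) - w)).im|
        ≤ C / (x * y) := by
      rw [← Complex.sub_im]
      calc |((1 : ℂ) / ((t : ℂ) - z) - 1 / ((t : ℂ) - w)).im|
          ≤ ‖(1 : ℂ) / ((t : ℂ) - z) - 1 / ((t : ℂ) - w)‖ :=
            Complex.abs_im_le_norm _
        _ = C / (x * y) := by rw [key, norm_div, norm_mul]
    refine h1.trans ?_
    have hx2 : ((t - z.re) ^ 2 + z.im ^ 2)⁻¹ = (x ^ 2)⁻¹ := by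
      rw [hx, Complex.sq_norm, Complex.normSq_apply]
      simp only [Complex.sub_re, Complex.sub_im, Complex.ofReal_re, Complex.ofReal_im]
      ring_nf
    have hy2 : ((t - w.re) ^ 2 + w.im ^ 2)⁻¹ = (y ^ 2)⁻¹ := by
      rw [hy, Complex.sq_norm, Complex.normSq_apply]
      simp only [Complex.sub_re, Complex.sub_im, Complex.ofReal_re, Complex.ofReal_im]
      ring_nf
    have hamgm : (x * y)⁻¹ ≤ 1 / 2 * ((x ^ 2)⁻¹ + (y ^ 2)⁻¹) := by
      rw [mul_inv, ← inv_pow, ← inv_pow]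
      nlinarith [sq_nonneg (x⁻¹ - y⁻¹)]
    calc C / (x * y) = C * (x * y)⁻¹ := by rw [div_eq_mul_inv]
      _ ≤ C * (1 / 2 * ((x ^ 2)⁻¹ + (y ^ 2)⁻¹)) := by
          exact mul_le_mul_of_nonneg_left hamgm hC0
      _ = g t := by rw [hg]; simp only [hx2, hy2]; ring
  have habs : |subtendedAngle S z - subtendedAngle S w| ≤ ∫ t in S, g t := by
    rw [hsub]
    have hni := norm_integral_le_integral_norm (μ := volume.restrict S)
      (f := fun t : ℝ => ((1 : ℂ) / ((t : ℂ) - z)).im - ((1 : ℂ) / ((t : ℂ) - w)).im)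
    simp only [Real.norm_eq_abs] at hni
    refine hni.trans ?_
    exact setIntegral_mono_on ((hiz.sub hiw).abs) hgint.integrableOn hS
      (fun t _ => hbound t)
  have hle : ∫ t in S, g t ≤ ∫ t : ℝ, g t := by
    refine setIntegral_le_integral hgint ?_
    filter_upwards with t
    have : 0 ≤ ((t - z.re) ^ 2 + z.im ^ 2)⁻¹ + ((t - w.re) ^ 2 + w.im ^ 2)⁻¹ := by positivity
    rw [hg]
    positivity
  have hval : ∫ t : ℝ, g t = C / 2 * (π / z.im + π / w.im) := by
    rw [hg]
    rw [MeasureTheory.integral_const_mul,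
      integral_add (poisson_integrable z.re z.im hz) (poisson_integrable w.re w.im hw),
      poisson_integral z.re z.im hz, poisson_integral w.re w.im hw]
  have := habs.trans (hle.trans_eq hval)
  calc |subtendedAngle S z - subtendedAngle S w| ≤ C / 2 * (π / z.im + π / w.im) := this
    _ = (π / 2) * C * (1 / z.im + 1 / w.im) := by ring
end

section
/- Let S ⊆ ℝ be a Borel set and x ∈ ℝ. If x is a Lebesgue density point of S (i.e. μ(S ∩ (x−h, x+h))/(2h) → 1 as h → 0⁺, where μ is Lebesgue measure), then θ(S, x+iε) → π as ε → 0⁺. If x is a Lebesgue density point of ℝ∖S, then θ(S, x+iε) → 0 as ε → 0⁺. -/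
open MeasureTheory Real Complex Set Filter

/-- `x` is a Lebesgue density point of `S`:
`μ(S ∩ (x-h, x+h)) / (2h) → 1` as `h → 0⁺`. -/
def IsLebesgueDensityPoint (S : Set ℝ) (x : ℝ) : Prop :=
  Tendsto (fun h : ℝ => (volume (S ∩ Set.Ioo (x - h) (x + h))).toReal / (2 * h))
    (nhdsWithin 0 (Set.Ioi 0)) (nhds 1)


lemma im_eq (ε x t : ℝ) :
    ((1 : ℂ) / ((t : ℂ) - ((x : ℂ) + ε * Complex.I))).im = ε / ((t - x) ^ 2 + ε ^ 2) := by
  rw [one_div, Complex.inv_im]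
  have h1 : ((t : ℂ) - ((x : ℂ) + ε * Complex.I)).im = -ε := by simp
  have h2 : ((t : ℂ) - ((x : ℂ) + ε * Complex.I)).re = t - x := by simp
  rw [Complex.normSq_apply, h1, h2]
  ring

lemma integrable_K {ε : ℝ} (hε : 0 < ε) (x : ℝ) :
    Integrable (fun t : ℝ => ε / ((t - x) ^ 2 + ε ^ 2)) := by
  have h : (fun t : ℝ => ε / ((t - x) ^ 2 + ε ^ 2))
      = fun t : ℝ => ε⁻¹ * ((fun u : ℝ => (1 + u ^ 2)⁻¹) ((t - x) * ε⁻¹)) := by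
    funext t
    field_simp
    ring
  rw [h]
  exact (((integrable_comp_mul_right_iff _ (inv_ne_zero hε.ne')).2
    integrable_inv_one_add_sq).comp_sub_right x).const_mul _

lemma integral_K {ε : ℝ} (hε : 0 < ε) (x : ℝ) :
    ∫ t : ℝ, ε / ((t - x) ^ 2 + ε ^ 2) = π := by
  have h : (fun t : ℝ => ε / ((t - x) ^ 2 + ε ^ 2))
      = fun t : ℝ => ε⁻¹ * ((fun u : ℝ => (1 + u ^ 2)⁻¹) ((t - x) / ε)) := by
    funext t; field_simp; ring
  rw [h, MeasureTheory.integral_const_mul]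
  have h2 : ∫ t : ℝ, (fun u : ℝ => (1 + u ^ 2)⁻¹) ((t - x) / ε)
      = ∫ t : ℝ, (fun u : ℝ => (1 + u ^ 2)⁻¹) (t / ε) := by
    exact integral_sub_right_eq_self (fun t : ℝ => (1 + (t / ε) ^ 2)⁻¹) x
  have h3 := Measure.integral_comp_div (fun u : ℝ => (1 + u ^ 2)⁻¹) ε
  simp only at h2 h3 ⊢
  rw [h2, h3, integral_univ_inv_one_add_sq, abs_of_pos hε, smul_eq_mul]
  field_simp


lemma denom_pos {ε : ℝ} (hε : 0 < ε) (r : ℝ) : 0 < r ^ 2 + ε ^ 2 := by positivity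

lemma hasDerivAt_w {ε : ℝ} (hε : 0 < ε) (r : ℝ) :
    HasDerivAt (fun r : ℝ => -ε * (r ^ 2 + ε ^ 2)⁻¹) (2 * ε * r / (r ^ 2 + ε ^ 2) ^ 2) r := by
  have hpow : HasDerivAt (fun r : ℝ => r ^ 2 + ε ^ 2) (2 * r) r := by
    simpa using (hasDerivAt_pow 2 r).add_const (ε ^ 2)
  have hinv := hpow.inv (denom_pos hε r).ne'
  have := hinv.const_mul (-ε)
  exact this.congr_deriv (by ring)

lemma w_nonneg {ε : ℝ} (hε : 0 < ε) {r : ℝ} (hr : 0 ≤ r) :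
    0 ≤ 2 * ε * r / (r ^ 2 + ε ^ 2) ^ 2 := by positivity

lemma tendsto_g {ε : ℝ} (hε : 0 < ε) :
    Tendsto (fun r : ℝ => -ε * (r ^ 2 + ε ^ 2)⁻¹) atTop (nhds 0) := by
  have h : Tendsto (fun r : ℝ => r ^ 2 + ε ^ 2) atTop atTop :=
    (tendsto_pow_atTop two_ne_zero).atTop_add tendsto_const_nhds
  simpa using (h.inv_tendsto_atTop).const_mul (-ε)

lemma cont_g {ε : ℝ} (hε : 0 < ε) : Continuous (fun r : ℝ => -ε * (r ^ 2 + ε ^ 2)⁻¹) :=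
  continuous_const.mul (((continuous_pow 2).add continuous_const).inv₀ (fun r => (denom_pos hε r).ne'))

lemma integral_w {ε : ℝ} (hε : 0 < ε) {a : ℝ} (ha : 0 ≤ a) :
    ∫ r in Ioi a, 2 * ε * r / (r ^ 2 + ε ^ 2) ^ 2 = ε / (a ^ 2 + ε ^ 2) := by
  rw [integral_Ioi_of_hasDerivAt_of_nonneg ((cont_g hε).continuousWithinAt)
    (fun r _ => hasDerivAt_w hε r) (fun r hr => w_nonneg hε (ha.trans hr.le)) (tendsto_g hε)]
  field_simp
  ring

lemma integrableOn_w {ε : ℝ} (hε : 0 < ε) {a : ℝ} (ha : 0 ≤ a) :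
    IntegrableOn (fun r : ℝ => 2 * ε * r / (r ^ 2 + ε ^ 2) ^ 2) (Ioi a) :=
  integrableOn_Ioi_deriv_of_nonneg ((cont_g hε).continuousWithinAt)
    (fun r _ => hasDerivAt_w hε r) (fun r hr => w_nonneg hε (ha.trans hr.le)) (tendsto_g hε)

lemma integral_tail {ε b : ℝ} (hε : 0 < ε) (hb : 0 < b) :
    ∫ r in Ioi b, 4 * ε / r ^ 2 = 4 * ε / b ∧
      IntegrableOn (fun r : ℝ => 4 * ε / r ^ 2) (Ioi b) := by
  have hderiv : ∀ r ∈ Ioi b, HasDerivAt (fun r : ℝ => -(4 * ε) * r⁻¹) (4 * ε / r ^ 2) r := by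
    intro r hr
    have := (hasDerivAt_inv (hb.trans hr).ne').const_mul (-(4 * ε))
    exact this.congr_deriv (by field_simp)
  have hcont : ContinuousWithinAt (fun r : ℝ => -(4 * ε) * r⁻¹) (Ici b) b :=
    (ContinuousAt.mul continuousAt_const (continuousAt_inv₀ hb.ne')).continuousWithinAt
  have hnn : ∀ r ∈ Ioi b, 0 ≤ 4 * ε / r ^ 2 := fun r hr => by positivity
  have htend : Tendsto (fun r : ℝ => -(4 * ε) * r⁻¹) atTop (nhds 0) := by
    simpa using tendsto_inv_atTop_zero.const_mul (-(4 * ε))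
  constructor
  · rw [integral_Ioi_of_hasDerivAt_of_nonneg hcont hderiv hnn htend]
    field_simp
    ring
  · exact integrableOn_Ioi_deriv_of_nonneg hcont hderiv hnn htend

lemma integral_half {ε : ℝ} (hε : 0 < ε) :
    ∫ r in Ioi (0:ℝ), 4 * ε / (r ^ 2 + ε ^ 2) = 2 * π ∧
      IntegrableOn (fun r : ℝ => 4 * ε / (r ^ 2 + ε ^ 2)) (Ioi (0:ℝ)) := by
  have hderiv : ∀ r : ℝ, HasDerivAt (fun r : ℝ => 4 * Real.arctan (r / ε))
      (4 * ε / (r ^ 2 + ε ^ 2)) r := by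
    intro r
    have h1 : HasDerivAt (fun r : ℝ => r / ε) (1 / ε) r := (hasDerivAt_id r).div_const ε
    have h2 := ((Real.hasDerivAt_arctan (r / ε)).comp r h1).const_mul 4
    exact h2.congr_deriv (by field_simp; ring)
  have hcont : ContinuousWithinAt (fun r : ℝ => 4 * Real.arctan (r / ε)) (Ici 0) 0 :=
    (continuous_const.mul (Real.continuous_arctan.comp (continuous_id.div_const ε))).continuousWithinAt
  have hnn : ∀ r ∈ Ioi (0:ℝ), 0 ≤ 4 * ε / (r ^ 2 + ε ^ 2) := fun r hr => by positivity
  have htend : Tendsto (fun r : ℝ => 4 * Real.arctan (r / ε)) atTop (nhds (2 * π)) := by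
    have h1 : Tendsto (fun r : ℝ => r / ε) atTop atTop := tendsto_id.atTop_div_const hε
    have h2 : Tendsto (fun r : ℝ => Real.arctan (r / ε)) atTop (nhds (π / 2)) :=
      (tendsto_nhds_of_tendsto_nhdsWithin Real.tendsto_arctan_atTop).comp h1
    have := h2.const_mul (4:ℝ)
    convert this using 2
    ring
  constructor
  · rw [integral_Ioi_of_hasDerivAt_of_nonneg hcont (fun r _ => hderiv r) hnn htend]
    simp
  · exact integrableOn_Ioi_deriv_of_nonneg hcont (fun r _ => hderiv r) hnn htend



lemma lemA (S : Set ℝ) (hS : MeasurableSet S) (x : ℝ)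
    (hd : Tendsto (fun h : ℝ => (volume (S ∩ Set.Ioo (x - h) (x + h))).toReal / (2 * h))
      (nhdsWithin 0 (Set.Ioi 0)) (nhds 0)) :
    Tendsto (fun ε : ℝ => ∫ t in S, ε / ((t - x) ^ 2 + ε ^ 2))
      (nhdsWithin 0 (Set.Ioi 0)) (nhds 0) := by
  rw [Metric.tendsto_nhdsWithin_nhds]
  intro c hc
  have hπ := Real.pi_pos
  set δ' : ℝ := c / (8 * π) with hδ'
  have hδ'pos : 0 < δ' := by positivity
  rw [Metric.tendsto_nhdsWithin_nhds] at hd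
  obtain ⟨h₀, hh₀, hdens⟩ := hd δ' hδ'pos
  set b : ℝ := h₀ / 2 with hb
  have hbpos : 0 < b := by positivity
  refine ⟨min b (c * b / 8), by positivity, ?_⟩
  intro ε hεmem hεd
  have hε : 0 < ε := hεmem
  rw [Real.dist_eq, sub_zero, abs_of_pos hε] at hεd
  have hεc : ε < c * b / 8 := lt_of_lt_of_le hεd (min_le_right _ _)
  -- the kernel is continuous and nonneg
  have hKcont : Continuous fun t : ℝ => ε / ((t - x) ^ 2 + ε ^ 2) :=
    continuous_const.div (((continuous_id.sub continuous_const).pow 2).add continuous_const)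
      (fun t => (denom_pos hε _).ne')
  have hKnn : ∀ t : ℝ, 0 ≤ ε / ((t - x) ^ 2 + ε ^ 2) := fun t => by positivity
  -- pointwise layer-cake representation
  have key : ∀ t : ℝ, ENNReal.ofReal (ε / ((t - x) ^ 2 + ε ^ 2))
      = ∫⁻ r : ℝ, (Ioi |t - x|).indicator
          (fun r => ENNReal.ofReal (2 * ε * r / (r ^ 2 + ε ^ 2) ^ 2)) r := by
    intro t
    have h1 : ∫ r in Ioi |t - x|, 2 * ε * r / (r ^ 2 + ε ^ 2) ^ 2
        = ε / ((t - x) ^ 2 + ε ^ 2) := by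
      rw [integral_w hε (abs_nonneg _), _root_.sq_abs]
    rw [← h1, ofReal_integral_eq_lintegral_ofReal (integrableOn_w hε (abs_nonneg _))
      ((ae_restrict_iff' measurableSet_Ioi).2 (ae_of_all _
        (fun r hr => w_nonneg hε ((abs_nonneg _).trans (le_of_lt hr))))),
      lintegral_indicator measurableSet_Ioi]
  -- the product-space function
  set F : ℝ × ℝ → ENNReal := fun p => Set.indicator {p : ℝ × ℝ | |p.1 - x| < p.2}
    (fun p => ENNReal.ofReal (2 * ε * p.2 / (p.2 ^ 2 + ε ^ 2) ^ 2)) p with hF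
  have hWcont : Continuous fun r : ℝ => 2 * ε * r / (r ^ 2 + ε ^ 2) ^ 2 :=
    (continuous_const.mul continuous_id).div
      (((continuous_pow 2).add continuous_const).pow 2)
      (fun r => pow_ne_zero 2 (denom_pos hε r).ne')
  have hFmeas : Measurable F :=
    Measurable.indicator (ENNReal.measurable_ofReal.comp
        ((hWcont.measurable).comp measurable_snd))
      ((isOpen_lt ((continuous_fst.sub continuous_const).abs) continuous_snd).measurableSet)
  have hFeq : ∀ t r : ℝ, (Ioi |t - x|).indicator
      (fun r => ENNReal.ofReal (2 * ε * r / (r ^ 2 + ε ^ 2) ^ 2)) r = F (t, r) := by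
    intro t r
    simp only [hF, Set.indicator_apply, Set.mem_setOf_eq, mem_Ioi]
  -- swap
  have hswap : ∫⁻ t in S, ENNReal.ofReal (ε / ((t - x) ^ 2 + ε ^ 2))
      = ∫⁻ r : ℝ, ∫⁻ t in S, F (t, r) := by
    calc ∫⁻ t in S, ENNReal.ofReal (ε / ((t - x) ^ 2 + ε ^ 2))
        = ∫⁻ t in S, ∫⁻ r : ℝ, F (t, r) := by
          apply lintegral_congr
          intro t
          rw [key t]
          exact lintegral_congr (fun r => hFeq t r)
      _ = ∫⁻ r : ℝ, ∫⁻ t in S, F (t, r) :=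
          lintegral_lintegral_swap hFmeas.aemeasurable
  -- evaluate inner integral
  have hinner : ∀ r : ℝ, ∫⁻ t in S, F (t, r)
      = ENNReal.ofReal (2 * ε * r / (r ^ 2 + ε ^ 2) ^ 2)
        * volume (S ∩ Ioo (x - r) (x + r)) := by
    intro r
    have hset : {t : ℝ | |t - x| < r} = Ioo (x - r) (x + r) := by
      ext t
      simp only [mem_setOf_eq, mem_Ioo, abs_lt]
      constructor
      · rintro ⟨h1, h2⟩; constructor <;> linarith
      · rintro ⟨h1, h2⟩; constructor <;> linarith
    have heq : ∀ t : ℝ, F (t, r) = (Ioo (x - r) (x + r)).indicator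
        (fun _ => ENNReal.ofReal (2 * ε * r / (r ^ 2 + ε ^ 2) ^ 2)) t := by
      intro t
      rw [← hset]
      simp only [hF, Set.indicator_apply, Set.mem_setOf_eq]
    rw [lintegral_congr heq, lintegral_indicator measurableSet_Ioo, setLIntegral_const,
      Measure.restrict_apply measurableSet_Ioo, Set.inter_comm]
  -- the function g of r
  have hgsplit : ∫⁻ r : ℝ, ∫⁻ t in S, F (t, r)
      = (∫⁻ r in Ioc (0:ℝ) b, ∫⁻ t in S, F (t, r)) + ∫⁻ r in Ioi b, ∫⁻ t in S, F (t, r) := by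
    rw [← lintegral_add_compl (fun r => ∫⁻ t in S, F (t, r)) (measurableSet_Ioi (a := (0:ℝ)))]
    have hzero : ∫⁻ r in (Ioi (0:ℝ))ᶜ, ∫⁻ t in S, F (t, r) = 0 := by
      rw [compl_Ioi]
      rw [setLIntegral_congr_fun measurableSet_Iic (fun r hr => ?_), lintegral_zero]
      rw [hinner r]
      have hmz : volume (S ∩ Ioo (x - r) (x + r)) = 0 := by
        have : Ioo (x - r) (x + r) = ∅ := Ioo_eq_empty (by simp only [mem_Iic] at hr; intro hlt; linarith)
        rw [this, inter_empty, measure_empty]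
      rw [hmz, mul_zero]
    rw [hzero, add_zero, ← Ioc_union_Ioi_eq_Ioi hbpos.le,
      lintegral_union measurableSet_Ioi (Set.Ioc_disjoint_Ioi le_rfl)]
  -- bound on (0, b]
  have hbound1 : ∫⁻ r in Ioc (0:ℝ) b, ∫⁻ t in S, F (t, r)
      ≤ ENNReal.ofReal (δ' * (2 * π)) := by
    have step : ∫⁻ r in Ioc (0:ℝ) b, ∫⁻ t in S, F (t, r)
        ≤ ∫⁻ r in Ioc (0:ℝ) b, ENNReal.ofReal (δ' * (4 * ε / (r ^ 2 + ε ^ 2))) := by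
      apply setLIntegral_mono
      · exact ENNReal.measurable_ofReal.comp (by fun_prop (disch := intros; positivity))
      · intro r hr
        rw [hinner r]
        have hr0 : 0 < r := hr.1
        have hrb : r ≤ b := hr.2
        -- measure bound from density
        have hle : volume (S ∩ Ioo (x - r) (x + r)) ≤ ENNReal.ofReal (2 * r) := by
          have := measure_mono (μ := volume) (Set.inter_subset_right (s := S) (t := Ioo (x - r) (x + r)))
          rwa [Real.volume_Ioo, show x + r - (x - r) = 2 * r by ring] at this
        have hfin : volume (S ∩ Ioo (x - r) (x + r)) ≠ ⊤ :=
          (lt_of_le_of_lt hle ENNReal.ofReal_lt_top).ne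
        have hratio : (volume (S ∩ Ioo (x - r) (x + r))).toReal / (2 * r) < δ' := by
          have h1 := hdens (show r ∈ Ioi (0:ℝ) from hr0)
            (show dist r 0 < h₀ by rw [Real.dist_eq, sub_zero, abs_of_pos hr0]; rw [hb] at hrb; linarith)
          rw [Real.dist_eq, sub_zero] at h1
          exact (le_abs_self _).trans_lt h1
        have hm : volume (S ∩ Ioo (x - r) (x + r)) ≤ ENNReal.ofReal (δ' * (2 * r)) := by
          apply le_of_lt
          rw [ENNReal.lt_ofReal_iff_toReal_lt hfin]
          rw [div_lt_iff₀ (by positivity)] at hratio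
          linarith [hratio]
        calc ENNReal.ofReal (2 * ε * r / (r ^ 2 + ε ^ 2) ^ 2) * volume (S ∩ Ioo (x - r) (x + r))
            ≤ ENNReal.ofReal (2 * ε * r / (r ^ 2 + ε ^ 2) ^ 2) * ENNReal.ofReal (δ' * (2 * r)) :=
              mul_le_mul_right hm _
          _ = ENNReal.ofReal (2 * ε * r / (r ^ 2 + ε ^ 2) ^ 2 * (δ' * (2 * r))) :=
              (ENNReal.ofReal_mul (w_nonneg hε hr0.le)).symm
          _ ≤ ENNReal.ofReal (δ' * (4 * ε / (r ^ 2 + ε ^ 2))) := by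
              apply ENNReal.ofReal_le_ofReal
              have hkey : 2 * ε * r / (r ^ 2 + ε ^ 2) ^ 2 * (2 * r)
                  ≤ 4 * ε / (r ^ 2 + ε ^ 2) := by
                rw [div_mul_eq_mul_div, div_le_div_iff₀ (by positivity) (by positivity)]
                nlinarith [mul_nonneg (mul_nonneg hε.le (sq_nonneg ε)) (denom_pos hε r).le]
              calc 2 * ε * r / (r ^ 2 + ε ^ 2) ^ 2 * (δ' * (2 * r))
                  = δ' * (2 * ε * r / (r ^ 2 + ε ^ 2) ^ 2 * (2 * r)) := by ring
                _ ≤ δ' * (4 * ε / (r ^ 2 + ε ^ 2)) := by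
                    exact mul_le_mul_of_nonneg_left hkey hδ'pos.le
    refine step.trans ?_
    have step2 : ∫⁻ r in Ioc (0:ℝ) b, ENNReal.ofReal (δ' * (4 * ε / (r ^ 2 + ε ^ 2)))
        ≤ ∫⁻ r in Ioi (0:ℝ), ENNReal.ofReal (δ' * (4 * ε / (r ^ 2 + ε ^ 2))) :=
      lintegral_mono_set Ioc_subset_Ioi_self
    refine step2.trans ?_
    rw [← ofReal_integral_eq_lintegral_ofReal ((integral_half hε).2.const_mul δ')
      (ae_of_all _ (fun r => by positivity))]
    apply ENNReal.ofReal_le_ofReal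
    rw [MeasureTheory.integral_const_mul, (integral_half hε).1]
  -- bound on (b, ∞)
  have hbound2 : ∫⁻ r in Ioi b, ∫⁻ t in S, F (t, r) ≤ ENNReal.ofReal (4 * ε / b) := by
    have step : ∫⁻ r in Ioi b, ∫⁻ t in S, F (t, r)
        ≤ ∫⁻ r in Ioi b, ENNReal.ofReal (4 * ε / r ^ 2) := by
      apply setLIntegral_mono
      · exact ENNReal.measurable_ofReal.comp (measurable_const.div (measurable_id.pow_const 2))
      · intro r hr
        rw [hinner r]
        have hr0 : 0 < r := hbpos.trans hr
        have hle : volume (S ∩ Ioo (x - r) (x + r)) ≤ ENNReal.ofReal (2 * r) := by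
          have := measure_mono (μ := volume) (Set.inter_subset_right (s := S) (t := Ioo (x - r) (x + r)))
          rwa [Real.volume_Ioo, show x + r - (x - r) = 2 * r by ring] at this
        calc ENNReal.ofReal (2 * ε * r / (r ^ 2 + ε ^ 2) ^ 2) * volume (S ∩ Ioo (x - r) (x + r))
            ≤ ENNReal.ofReal (2 * ε * r / (r ^ 2 + ε ^ 2) ^ 2) * ENNReal.ofReal (2 * r) :=
              mul_le_mul_right hle _
          _ = ENNReal.ofReal (2 * ε * r / (r ^ 2 + ε ^ 2) ^ 2 * (2 * r)) :=
              (ENNReal.ofReal_mul (w_nonneg hε hr0.le)).symm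
          _ ≤ ENNReal.ofReal (4 * ε / r ^ 2) := by
              apply ENNReal.ofReal_le_ofReal
              rw [div_mul_eq_mul_div, div_le_div_iff₀ (by positivity) (by positivity)]
              nlinarith [mul_nonneg hε.le (sq_nonneg (r * ε)), mul_nonneg hε.le (sq_nonneg (ε * ε))]
    refine step.trans ?_
    rw [← ofReal_integral_eq_lintegral_ofReal (integral_tail hε hbpos).2
      (ae_of_all _ (fun r => div_nonneg (by positivity) (sq_nonneg r)))]
    exact ENNReal.ofReal_le_ofReal (le_of_eq (integral_tail hε hbpos).1)
  -- put it together
  have hA : ∫⁻ t in S, ENNReal.ofReal (ε / ((t - x) ^ 2 + ε ^ 2))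
      ≤ ENNReal.ofReal (δ' * (2 * π) + 4 * ε / b) := by
    rw [hswap, hgsplit]
    refine le_trans (add_le_add hbound1 hbound2) ?_
    rw [ENNReal.ofReal_add (by positivity) (by positivity)]
  -- convert back to the Bochner integral
  have hrepr : ∫ t in S, ε / ((t - x) ^ 2 + ε ^ 2)
      = (∫⁻ t in S, ENNReal.ofReal (ε / ((t - x) ^ 2 + ε ^ 2))).toReal := by
    rw [integral_eq_lintegral_of_nonneg_ae (ae_of_all _ hKnn)
      hKcont.aestronglyMeasurable.restrict]
  have hfinal : ∫ t in S, ε / ((t - x) ^ 2 + ε ^ 2) ≤ δ' * (2 * π) + 4 * ε / b := by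
    rw [hrepr]
    exact ENNReal.toReal_le_of_le_ofReal (by positivity) hA
  have hnn : 0 ≤ ∫ t in S, ε / ((t - x) ^ 2 + ε ^ 2) := integral_nonneg hKnn
  rw [Real.dist_eq, sub_zero, _root_.abs_of_nonneg hnn]
  have h1 : δ' * (2 * π) = c / 4 := by
    rw [hδ']; field_simp; ring
  have h2 : 4 * ε / b < c / 2 := by
    rw [div_lt_iff₀ hbpos]
    rw [lt_div_iff₀ (by norm_num : (0:ℝ) < 8)] at hεc
    linarith
  calc ∫ t in S, ε / ((t - x) ^ 2 + ε ^ 2) ≤ δ' * (2 * π) + 4 * ε / b := hfinal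
    _ < c / 4 + c / 2 := by rw [h1]; linarith
    _ < c := by linarith

lemma ratio_compl (S : Set ℝ) (hS : MeasurableSet S) (x : ℝ) :
    (fun h : ℝ => (volume (S ∩ Set.Ioo (x - h) (x + h))).toReal / (2 * h))
      =ᶠ[nhdsWithin 0 (Set.Ioi 0)]
    (fun h : ℝ => 1 - (volume (Sᶜ ∩ Set.Ioo (x - h) (x + h))).toReal / (2 * h)) := by
  filter_upwards [self_mem_nhdsWithin] with h hh
  have hhpos : 0 < h := hh
  have hI : volume (Ioo (x - h) (x + h)) = ENNReal.ofReal (2 * h) := by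
    rw [Real.volume_Ioo]
    congr 1
    ring
  have hsum := measure_inter_add_diff (μ := volume) (Ioo (x - h) (x + h)) hS
  rw [diff_eq, hI] at hsum
  have ha : volume (Ioo (x - h) (x + h) ∩ S) ≠ ⊤ :=
    (lt_of_le_of_lt (measure_mono Set.inter_subset_left)
      (by rw [hI]; exact ENNReal.ofReal_lt_top)).ne
  have hb : volume (Ioo (x - h) (x + h) ∩ Sᶜ) ≠ ⊤ :=
    (lt_of_le_of_lt (measure_mono Set.inter_subset_left)
      (by rw [hI]; exact ENNReal.ofReal_lt_top)).ne
  have htr : (volume (Ioo (x - h) (x + h) ∩ S)).toReal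
      + (volume (Ioo (x - h) (x + h) ∩ Sᶜ)).toReal = 2 * h := by
    rw [← ENNReal.toReal_add ha hb, hsum, ENNReal.toReal_ofReal (by positivity)]
  rw [Set.inter_comm S, Set.inter_comm Sᶜ]
  field_simp
  linarith

theorem subtendedAngle_tendsto_of_densityPoint (S : Set ℝ) (hS : MeasurableSet S)
    (x : ℝ) :
    (IsLebesgueDensityPoint S x →
      Tendsto (fun ε : ℝ => subtendedAngle S ((x : ℂ) + ε * Complex.I))
        (nhdsWithin 0 (Set.Ioi 0)) (nhds π)) ∧
    (IsLebesgueDensityPoint Sᶜ x →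
      Tendsto (fun ε : ℝ => subtendedAngle S ((x : ℂ) + ε * Complex.I))
        (nhdsWithin 0 (Set.Ioi 0)) (nhds 0)) := by
  constructor
  · intro hd
    have h1 : Tendsto (fun h : ℝ => (volume (Sᶜ ∩ Set.Ioo (x - h) (x + h))).toReal / (2 * h))
        (nhdsWithin 0 (Set.Ioi 0)) (nhds 0) := by
      have hc := ratio_compl Sᶜ hS.compl x
      simp only [compl_compl] at hc
      refine Tendsto.congr' hc.symm ?_
      have := (tendsto_const_nhds (x := (1:ℝ))).sub hd
      simpa using this
    have h2 := lemA Sᶜ hS.compl x h1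
    have heq : (fun ε : ℝ => subtendedAngle S ((x : ℂ) + ε * Complex.I))
        =ᶠ[nhdsWithin 0 (Set.Ioi 0)]
        (fun ε : ℝ => π - ∫ t in Sᶜ, ε / ((t - x) ^ 2 + ε ^ 2)) := by
      filter_upwards [self_mem_nhdsWithin] with ε hε
      have hεpos : 0 < ε := hε
      have hsub : subtendedAngle S ((x : ℂ) + ε * Complex.I)
          = ∫ t in S, ε / ((t - x) ^ 2 + ε ^ 2) := by
        simp only [subtendedAngle, im_eq]
      rw [hsub, eq_sub_iff_add_eq, integral_add_compl hS (integrable_K hεpos x),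
        integral_K hεpos x]
    refine Tendsto.congr' heq.symm ?_
    have := (tendsto_const_nhds (x := π)).sub h2
    simpa using this
  · intro hd
    have h1 : Tendsto (fun h : ℝ => (volume (S ∩ Set.Ioo (x - h) (x + h))).toReal / (2 * h))
        (nhdsWithin 0 (Set.Ioi 0)) (nhds 0) := by
      refine Tendsto.congr' (ratio_compl S hS x).symm ?_
      have := (tendsto_const_nhds (x := (1:ℝ))).sub hd
      simpa using this
    have h2 := lemA S hS x h1
    have heq : (fun ε : ℝ => subtendedAngle S ((x : ℂ) + ε * Complex.I))
        = fun ε : ℝ => ∫ t in S, ε / ((t - x) ^ 2 + ε ^ 2) := by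
      funext ε
      simp only [subtendedAngle, im_eq]
    rw [heq]
    exact h2
end

section
/- Let a < b be real numbers, q : [a,b] → ℝ continuous, and z ∈ ℂ with Im z > 0. Suppose y : [a,b] → ℂ is twice continuously differentiable and satisfies −y''(x) + q(x)y(x) = z·y(x) for all x ∈ [a,b], together with y(a) = 1 and y(b) = 0. Then Im(y'(a)) = (Im z) · ∫_a^b |y(x)|² dx, and in particular Im(y'(a)) > 0. Consequently, the truncated Titchmarsh–Weyl value m_b(z) = y'(a) has positive imaginary part. -/
open MeasureTheory Real Complex Set intervalIntegral

theorem im_deriv_at_left_endpoint_pos (a b : ℝ) (hab : a < b)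
    (q : ℝ → ℝ) (hq : ContinuousOn q (Set.Icc a b))
    (z : ℂ) (hz : 0 < z.im)
    (y y' y'' : ℝ → ℂ)
    (hy' : ∀ x ∈ Set.Icc a b, HasDerivWithinAt y (y' x) (Set.Icc a b) x)
    (hy'' : ∀ x ∈ Set.Icc a b, HasDerivWithinAt y' (y'' x) (Set.Icc a b) x)
    (hy''cont : ContinuousOn y'' (Set.Icc a b))
    (hode : ∀ x ∈ Set.Icc a b, -y'' x + (q x : ℂ) * y x = z * y x)
    (hya : y a = 1) (hyb : y b = 0) :
    (y' a).im = z.im * ∫ x in a..b, ‖y x‖ ^ 2 ∧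
    0 < (y' a).im := by
  have hycont : ContinuousOn y (Set.Icc a b) := fun x hx => (hy' x hx).continuousWithinAt
  set f : ℝ → ℝ := fun x => ‖y x‖ ^ 2 with hf
  have hfcont : ContinuousOn f (Set.Icc a b) :=
    ((continuous_norm.comp_continuousOn hycont).pow 2)
  set g : ℝ → ℝ := fun x => (star (y x) * y' x).im with hg
  -- derivative of g
  have hgd : ∀ x ∈ Set.Icc a b,
      HasDerivWithinAt g (-z.im * f x) (Set.Icc a b) x := by
    intro x hx
    have hmul : HasDerivWithinAt (fun t => star (y t) * y' t)
        (star (y' x) * y' x + star (y x) * y'' x) (Set.Icc a b) x :=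
      (hy' x hx).star.mul (hy'' x hx)
    have him := Complex.imCLM.hasFDerivAt.comp_hasDerivWithinAt x hmul
    refine him.congr_deriv ?_
    have hode' : y'' x = (q x : ℂ) * y x - z * y x := by
      have := hode x hx; linear_combination -this
    rw [hode']
    simp only [Complex.imCLM_apply, Complex.add_im, Complex.mul_im, Complex.star_def,
      Complex.conj_re, Complex.conj_im, Complex.sub_re, Complex.sub_im,
      Complex.mul_re, Complex.ofReal_re, Complex.ofReal_im, hf, Complex.sq_norm,
      Complex.normSq_apply]
    ring
  have hgcont : ContinuousOn g (Set.Icc a b) := fun x hx => (hgd x hx).continuousWithinAt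
  have hintf : IntervalIntegrable f volume a b := by
    apply ContinuousOn.intervalIntegrable
    rwa [Set.uIcc_of_le hab.le]
  have hint : IntervalIntegrable (fun x => -z.im * f x) volume a b :=
    (hintf.const_mul _)
  have hftc : (∫ x in a..b, -z.im * f x) = g b - g a := by
    apply intervalIntegral.integral_eq_sub_of_hasDeriv_right_of_le hab.le hgcont _ hint
    intro x hx
    exact ((hgd x (Set.Ioo_subset_Icc_self hx)).hasDerivAt
      (Icc_mem_nhds hx.1 hx.2)).hasDerivWithinAt
  have hga : g a = (y' a).im := by simp [hg, hya]
  have hgb : g b = 0 := by simp [hg, hyb]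
  rw [intervalIntegral.integral_const_mul, hga, hgb] at hftc
  have hmain : (y' a).im = z.im * ∫ x in a..b, f x := by linarith
  refine ⟨hmain, ?_⟩
  -- positivity of the integral
  have hfa : f a = 1 := by simp [hf, hya]
  have hev : f ⁻¹' Set.Ioi (1/2 : ℝ) ∈ nhdsWithin a (Set.Icc a b) := by
    have h1 : ContinuousWithinAt f (Set.Icc a b) a :=
      hfcont a (Set.left_mem_Icc.mpr hab.le)
    apply h1
    rw [hfa]
    exact Ioi_mem_nhds (by norm_num)
  rw [nhdsWithin_Icc_eq_nhdsGE hab] at hev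
  obtain ⟨c, hc, hIcc⟩ := mem_nhdsGE_iff_exists_Icc_subset.mp hev
  set c0 := min c b with hc0
  have hac0 : a < c0 := lt_min hc hab
  have hc0b : c0 ≤ b := min_le_right _ _
  have hsub1 : IntervalIntegrable f volume a c0 :=
    hintf.mono_set (by
      rw [Set.uIcc_of_le hab.le, Set.uIcc_of_le hac0.le]
      exact Set.Icc_subset_Icc le_rfl hc0b)
  have hsub2 : IntervalIntegrable f volume c0 b :=
    hintf.mono_set (by
      rw [Set.uIcc_of_le hab.le, Set.uIcc_of_le hc0b]
      exact Set.Icc_subset_Icc hac0.le le_rfl)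
  have hsplit : (∫ x in a..b, f x) = (∫ x in a..c0, f x) + ∫ x in c0..b, f x :=
    (intervalIntegral.integral_add_adjacent_intervals hsub1 hsub2).symm
  have h1 : (1/2 : ℝ) * (c0 - a) ≤ ∫ x in a..c0, f x := by
    have := intervalIntegral.integral_mono_on hac0.le
      (_root_.intervalIntegrable_const (c := (1/2 : ℝ))) hsub1
      (fun x hx => le_of_lt (hIcc ⟨hx.1, le_trans hx.2 (min_le_left _ _)⟩))
    simpa [mul_comm] using this
  have h2 : 0 ≤ ∫ x in c0..b, f x :=
    intervalIntegral.integral_nonneg hc0b (fun x _ => by positivity)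
  have hIpos : 0 < ∫ x in a..b, f x := by
    rw [hsplit]; nlinarith
  rw [hmain]
  exact mul_pos hz hIpos
end

section
/- Let q : [a,∞) → ℝ be continuous, λ ∈ ℝ, and let u, v be the solutions of −y'' + q(x)y = λy with u(a)=1, u'(a)=0, v(a)=0, v'(a)=1. Given real numbers a₁,b₁,c₁ and a₂,b₂,c₂, define for i = 1,2: Pᵢ := aᵢ(u')² + bᵢu'v' + cᵢ(v')², Qᵢ := −2aᵢuu' − bᵢ(u'v + uv') − 2cᵢvv', Rᵢ := aᵢu² + bᵢuv + cᵢv². Then for every x ∈ [a,∞), 2(P₁R₂ + P₂R₁) − Q₁Q₂ = 2(a₁c₂ + a₂c₁) − b₁b₂. In particular, 4P₁R₁ − Q₁² = 4a₁c₁ − b₁² for all x. -/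
open Set

theorem appell_inner_product_of_quadratic_forms (a : ℝ) (q : ℝ → ℝ)
    (hq : ContinuousOn q (Set.Ici a)) (lam : ℝ)
    (u u' u'' v v' v'' : ℝ → ℝ)
    (hu' : ∀ x ∈ Set.Ici a, HasDerivWithinAt u (u' x) (Set.Ici a) x)
    (hu'' : ∀ x ∈ Set.Ici a, HasDerivWithinAt u' (u'' x) (Set.Ici a) x)
    (hv' : ∀ x ∈ Set.Ici a, HasDerivWithinAt v (v' x) (Set.Ici a) x)
    (hv'' : ∀ x ∈ Set.Ici a, HasDerivWithinAt v' (v'' x) (Set.Ici a) x)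
    (hodeu : ∀ x ∈ Set.Ici a, -u'' x + q x * u x = lam * u x)
    (hodev : ∀ x ∈ Set.Ici a, -v'' x + q x * v x = lam * v x)
    (hua : u a = 1) (hu'a : u' a = 0) (hva : v a = 0) (hv'a : v' a = 1)
    (a₁ b₁ c₁ a₂ b₂ c₂ : ℝ)
    (P₁ Q₁ R₁ P₂ Q₂ R₂ : ℝ → ℝ)
    (hP₁ : P₁ = fun x => a₁ * u' x ^ 2 + b₁ * (u' x * v' x) + c₁ * v' x ^ 2)
    (hQ₁ : Q₁ = fun x =>
      -2 * a₁ * (u x * u' x) - b₁ * (u' x * v x + u x * v' x) - 2 * c₁ * (v x * v' x))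
    (hR₁ : R₁ = fun x => a₁ * u x ^ 2 + b₁ * (u x * v x) + c₁ * v x ^ 2)
    (hP₂ : P₂ = fun x => a₂ * u' x ^ 2 + b₂ * (u' x * v' x) + c₂ * v' x ^ 2)
    (hQ₂ : Q₂ = fun x =>
      -2 * a₂ * (u x * u' x) - b₂ * (u' x * v x + u x * v' x) - 2 * c₂ * (v x * v' x))
    (hR₂ : R₂ = fun x => a₂ * u x ^ 2 + b₂ * (u x * v x) + c₂ * v x ^ 2) :
    ∀ x ∈ Set.Ici a,
      2 * (P₁ x * R₂ x + P₂ x * R₁ x) - Q₁ x * Q₂ x = 2 * (a₁ * c₂ + a₂ * c₁) - b₁ * b₂ ∧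
      4 * (P₁ x * R₁ x) - Q₁ x ^ 2 = 4 * (a₁ * c₁) - b₁ ^ 2 := by
  -- Wronskian is constant = 1
  have hW : ∀ x ∈ Set.Ici a, u x * v' x - u' x * v x = 1 := by
    have hder : ∀ x ∈ Set.Ici a,
        HasDerivWithinAt (fun y => u y * v' y - u' y * v y) 0 (Set.Ici a) x := by
      intro x hx
      have h := ((hu' x hx).mul (hv'' x hx)).sub ((hu'' x hx).mul (hv' x hx))
      have hu2 : u'' x = (q x - lam) * u x := by have := hodeu x hx; linarith
      have hv2 : v'' x = (q x - lam) * v x := by have := hodev x hx; linarith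
      refine h.congr_deriv ?_
      rw [hu2, hv2]; ring
    have key : ∀ x ∈ Set.Ici a,
        ‖(fun y => u y * v' y - u' y * v y) x -
          (fun y => u y * v' y - u' y * v y) a‖ ≤ 0 * ‖x - a‖ := by
      intro x hx
      exact (convex_Ici a).norm_image_sub_le_of_norm_hasDerivWithin_le
        hder (fun y hy => by simp) (self_mem_Ici) hx
    intro x hx
    have := key x hx
    simp only [zero_mul, norm_le_zero_iff, sub_eq_zero] at this
    rw [this, hua, hu'a, hva, hv'a]; ring
  intro x hx
  have hWx := hW x hx
  subst hP₁ hQ₁ hR₁ hP₂ hQ₂ hR₂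
  simp only
  constructor
  · linear_combination ((2 * (a₁ * c₂ + a₂ * c₁) - b₁ * b₂) *
      (u x * v' x - u' x * v x + 1)) * hWx
  · linear_combination ((4 * (a₁ * c₁) - b₁ ^ 2) *
      (u x * v' x - u' x * v x + 1)) * hWx
end

section
/- Let q : [a,∞) → ℝ be continuous, λ ∈ ℝ, and let u, v be the solutions of −y'' + q(x)y = λy with u(a)=1, u'(a)=0, v(a)=0, v'(a)=1. Let A ∈ ℝ and B > 0. Define r₀(x) := √((u(x)+Av(x))² + B²v(x)²) and θ₀(x) := ∫_a^x B/((u(t)+Av(t))² + B²v(t)²) dt. Then r₀(x) > 0 for all x ∈ [a,∞), θ₀ is strictly increasing with θ₀(a) = 0, and for all x ∈ [a,∞): u(x) + Av(x) = r₀(x)·cos(θ₀(x)) and B·v(x) = r₀(x)·sin(θ₀(x)). -/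
open Set Real MeasureTheory intervalIntegral

lemma prufer_aux_const {f : ℝ → ℝ} {a : ℝ}
    (hd : ∀ x ∈ Set.Ici a, HasDerivWithinAt f 0 (Set.Ici a) x) :
    ∀ x ∈ Set.Ici a, f x = f a := by
  intro x hx
  have hcont : ContinuousOn f (Set.Icc a x) := fun y hy =>
    ((hd y hy.1).continuousWithinAt).mono Set.Icc_subset_Ici_self
  have := constant_of_has_deriv_right_zero hcont (fun y hy =>
    (hd y hy.1).mono (Set.Ici_subset_Ici.mpr hy.1))
  exact this x ⟨hx, le_rfl⟩

theorem prufer_polar_representation (a : ℝ) (q : ℝ → ℝ)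
    (hq : ContinuousOn q (Set.Ici a)) (lam : ℝ)
    (u u' u'' v v' v'' : ℝ → ℝ)
    (hu' : ∀ x ∈ Set.Ici a, HasDerivWithinAt u (u' x) (Set.Ici a) x)
    (hu'' : ∀ x ∈ Set.Ici a, HasDerivWithinAt u' (u'' x) (Set.Ici a) x)
    (hv' : ∀ x ∈ Set.Ici a, HasDerivWithinAt v (v' x) (Set.Ici a) x)
    (hv'' : ∀ x ∈ Set.Ici a, HasDerivWithinAt v' (v'' x) (Set.Ici a) x)
    (hodeu : ∀ x ∈ Set.Ici a, -u'' x + q x * u x = lam * u x)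
    (hodev : ∀ x ∈ Set.Ici a, -v'' x + q x * v x = lam * v x)
    (hua : u a = 1) (hu'a : u' a = 0) (hva : v a = 0) (hv'a : v' a = 1)
    (A B : ℝ) (hB : 0 < B)
    (r₀ θ₀ : ℝ → ℝ)
    (hr₀ : r₀ = fun x => Real.sqrt ((u x + A * v x) ^ 2 + B ^ 2 * v x ^ 2))
    (hθ₀ : θ₀ = fun x => ∫ t in a..x, B / ((u t + A * v t) ^ 2 + B ^ 2 * v t ^ 2)) :
    (∀ x ∈ Set.Ici a, 0 < r₀ x) ∧
    StrictMonoOn θ₀ (Set.Ici a) ∧ θ₀ a = 0 ∧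
    (∀ x ∈ Set.Ici a,
      u x + A * v x = r₀ x * Real.cos (θ₀ x) ∧
      B * v x = r₀ x * Real.sin (θ₀ x)) := by
  -- Wronskian is constantly 1
  have hWd : ∀ x ∈ Set.Ici a, HasDerivWithinAt
      (fun x => u x * v' x - u' x * v x) 0 (Set.Ici a) x := by
    intro x hx
    have h := ((hu' x hx).mul (hv'' x hx)).sub ((hu'' x hx).mul (hv' x hx))
    have e1 := hodeu x hx
    have e2 := hodev x hx
    refine h.congr_deriv ?_
    linear_combination v x * e1 - u x * e2
  have hW : ∀ x ∈ Set.Ici a, u x * v' x - u' x * v x = 1 := by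
    have := prufer_aux_const hWd
    intro x hx
    rw [this x hx, hua, hva, hu'a, hv'a]; ring
  -- positivity of R
  set R : ℝ → ℝ := fun x => (u x + A * v x) ^ 2 + B ^ 2 * v x ^ 2 with hR
  have hRpos : ∀ x ∈ Set.Ici a, 0 < R x := by
    intro x hx
    show 0 < (u x + A * v x) ^ 2 + B ^ 2 * v x ^ 2
    rcases eq_or_ne (v x) 0 with h | h
    · have hW1 := hW x hx
      rw [h] at hW1
      have hu0 : u x ≠ 0 := by intro h0; rw [h0] at hW1; simp at hW1
      rw [h]
      have : 0 < u x ^ 2 := by positivity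
      nlinarith
    · have : 0 < B ^ 2 * v x ^ 2 := by positivity
      nlinarith [sq_nonneg (u x + A * v x)]
  have hrpos : ∀ x ∈ Set.Ici a, 0 < r₀ x := by
    intro x hx
    rw [hr₀]
    exact Real.sqrt_pos.mpr (hRpos x hx)
  -- continuity
  have hucont : ContinuousOn u (Set.Ici a) := fun x hx => (hu' x hx).continuousWithinAt
  have hvcont : ContinuousOn v (Set.Ici a) := fun x hx => (hv' x hx).continuousWithinAt
  have hRcont : ContinuousOn R (Set.Ici a) := by
    apply ContinuousOn.add
    · exact ((hucont.add (continuousOn_const.mul hvcont)).pow 2)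
    · exact continuousOn_const.mul (hvcont.pow 2)
  set g : ℝ → ℝ := fun t => B / R t with hg
  have hgcont : ContinuousOn g (Set.Ici a) :=
    continuousOn_const.div hRcont (fun x hx => (hRpos x hx).ne')
  have hInt : ∀ x ∈ Set.Ici a, ∀ y ∈ Set.Ici a, IntervalIntegrable g volume x y := by
    intro x hx y hy
    apply ContinuousOn.intervalIntegrable
    exact hgcont.mono (fun t ht => le_trans (le_min hx hy) ht.1)
  have hθeq : θ₀ = fun x => ∫ t in a..x, g t := hθ₀
  have hθd : ∀ x ∈ Set.Ici a, HasDerivWithinAt θ₀ (g x) (Set.Ici a) x := by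
    intro x hx
    rw [hθeq]
    rcases eq_or_lt_of_le (Set.mem_Ici.mp hx) with rfl | h
    · exact intervalIntegral.integral_hasDerivWithinAt_right (t := Set.Ioi a)
        (hInt a Set.self_mem_Ici a Set.self_mem_Ici)
        ⟨Set.Ici a, Filter.mem_of_superset self_mem_nhdsWithin Set.Ioi_subset_Ici_self,
          hgcont.aestronglyMeasurable measurableSet_Ici⟩
        ((hgcont a Set.self_mem_Ici).mono Set.Ioi_subset_Ici_self)
    · have hm : Set.Ici a ∈ nhds x := Ici_mem_nhds h
      exact (intervalIntegral.integral_hasDerivAt_right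
        (hInt a Set.self_mem_Ici x hx)
        ⟨Set.Ici a, hm, (hgcont.aestronglyMeasurable measurableSet_Ici)⟩
        (hgcont.continuousAt hm)).hasDerivWithinAt
  have hθa : θ₀ a = 0 := by rw [hθeq]; simp
  have hmono : StrictMonoOn θ₀ (Set.Ici a) := by
    intro x hx y hy hxy
    have hsplit : θ₀ x + ∫ t in x..y, g t = θ₀ y := by
      rw [hθeq]
      exact intervalIntegral.integral_add_adjacent_intervals (hInt a Set.self_mem_Ici x hx) (hInt x hx y hy)
    have hpos : 0 < ∫ t in x..y, g t := by
      apply intervalIntegral.intervalIntegral_pos_of_pos_on (hInt x hx y hy) _ hxy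
      intro t ht
      exact div_pos hB (hRpos t (le_trans hx (le_of_lt ht.1)))
    linarith
  -- derivative of r₀
  have hrR : ∀ x, r₀ x = Real.sqrt (R x) := fun x => by rw [hr₀]
  have hrfun : r₀ = fun x => Real.sqrt (R x) := hr₀
  set D : ℝ → ℝ := fun x =>
    2 * (u x + A * v x) ^ 1 * (u' x + A * v' x) + B ^ 2 * (2 * v x ^ 1 * v' x) with hD
  have hwD : ∀ x ∈ Set.Ici a, HasDerivWithinAt (fun x => u x + A * v x)
      (u' x + A * v' x) (Set.Ici a) x := fun x hx =>
    (hu' x hx).add ((hv' x hx).const_mul A)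
  have hRd : ∀ x ∈ Set.Ici a, HasDerivWithinAt R (D x) (Set.Ici a) x := fun x hx =>
    ((hwD x hx).pow 2).add (((hv' x hx).pow 2).const_mul (B ^ 2))
  have hrd : ∀ x ∈ Set.Ici a, HasDerivWithinAt r₀ (1 / (2 * Real.sqrt (R x)) * D x)
      (Set.Ici a) x := by
    intro x hx
    rw [hrfun]
    exact (Real.hasDerivAt_sqrt (hRpos x hx).ne').comp_hasDerivWithinAt x (hRd x hx)
  -- normalized components
  set cc : ℝ → ℝ := fun x => (u x + A * v x) / r₀ x with hcc
  set ss : ℝ → ℝ := fun x => B * v x / r₀ x with hss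
  have hr2 : ∀ x ∈ Set.Ici a, r₀ x ^ 2 = R x := fun x hx => by
    rw [hrR]; exact Real.sq_sqrt (hRpos x hx).le
  have hcd : ∀ x ∈ Set.Ici a, HasDerivWithinAt cc (-(ss x) * g x) (Set.Ici a) x := by
    intro x hx
    have h := (hwD x hx).div (hrd x hx) (hrpos x hx).ne'
    refine h.congr_deriv (Eq.symm ?_)
    have hnum : (u' x + A * v' x) * R x - (u x + A * v x) * (D x / 2)
        = -(B ^ 2 * v x) := by
      show (u' x + A * v' x) * ((u x + A * v x) ^ 2 + B ^ 2 * v x ^ 2)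
        - (u x + A * v x) * ((2 * (u x + A * v x) ^ 1 * (u' x + A * v' x)
          + B ^ 2 * (2 * v x ^ 1 * v' x)) / 2) = -(B ^ 2 * v x)
      linear_combination (-(B ^ 2) * v x) * hW x hx
    have h2 := hr2 x hx
    have hrne := (hrpos x hx).ne'
    have hRne := (hRpos x hx).ne'
    rw [hss, hg, ← hrR x]
    beta_reduce
    rw [← h2] at hnum ⊢
    have key : ((u' x + A * v' x) * r₀ x - (u x + A * v x) * (1 / (2 * r₀ x) * D x)) / r₀ x ^ 2
        = ((u' x + A * v' x) * r₀ x ^ 2 - (u x + A * v x) * (D x / 2)) / r₀ x ^ 3 := by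
      field_simp
    rw [key, hnum]
    field_simp
  have hsd : ∀ x ∈ Set.Ici a, HasDerivWithinAt ss (cc x * g x) (Set.Ici a) x := by
    intro x hx
    have h := ((hv' x hx).const_mul B).div (hrd x hx) (hrpos x hx).ne'
    refine h.congr_deriv (Eq.symm ?_)
    have hnum : (B * v' x) * R x - (B * v x) * (D x / 2)
        = B * (u x + A * v x) := by
      show (B * v' x) * ((u x + A * v x) ^ 2 + B ^ 2 * v x ^ 2)
        - (B * v x) * ((2 * (u x + A * v x) ^ 1 * (u' x + A * v' x)
          + B ^ 2 * (2 * v x ^ 1 * v' x)) / 2) = B * (u x + A * v x)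
      linear_combination (B * (u x + A * v x)) * hW x hx
    have h2 := hr2 x hx
    have hrne := (hrpos x hx).ne'
    have hRne := (hRpos x hx).ne'
    rw [hcc, hg, ← hrR x]
    beta_reduce
    rw [← h2] at hnum ⊢
    have key : (B * v' x * r₀ x - B * v x * (1 / (2 * r₀ x) * D x)) / r₀ x ^ 2
        = (B * v' x * r₀ x ^ 2 - B * v x * (D x / 2)) / r₀ x ^ 3 := by
      field_simp
    rw [key, hnum]
    field_simp
  -- the conserved quantity
  set f : ℝ → ℝ := fun x =>
    (cc x - Real.cos (θ₀ x)) ^ 2 + (ss x - Real.sin (θ₀ x)) ^ 2 with hf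
  have hfd : ∀ x ∈ Set.Ici a, HasDerivWithinAt f 0 (Set.Ici a) x := by
    intro x hx
    have hcos : HasDerivWithinAt (fun x => Real.cos (θ₀ x))
        (-Real.sin (θ₀ x) * g x) (Set.Ici a) x :=
      (Real.hasDerivAt_cos (θ₀ x)).comp_hasDerivWithinAt x (hθd x hx)
    have hsin : HasDerivWithinAt (fun x => Real.sin (θ₀ x))
        (Real.cos (θ₀ x) * g x) (Set.Ici a) x :=
      (Real.hasDerivAt_sin (θ₀ x)).comp_hasDerivWithinAt x (hθd x hx)
    have h := (((hcd x hx).sub hcos).pow 2).add (((hsd x hx).sub hsin).pow 2)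
    refine h.congr_deriv (Eq.symm ?_)
    simp only [Pi.sub_apply]
    ring
  have hra : r₀ a = 1 := by rw [hr₀]; simp [hua, hva]
  have hfa : f a = 0 := by
    rw [hf]
    simp only [hcc, hss, hθa, hua, hva, hra, Real.cos_zero, Real.sin_zero]
    norm_num
  have hfzero : ∀ x ∈ Set.Ici a, f x = 0 := by
    intro x hx
    rw [prufer_aux_const hfd x hx, hfa]
  refine ⟨hrpos, hmono, hθa, ?_⟩
  intro x hx
  have hfx := hfzero x hx
  rw [hf] at hfx
  have hfx' : (cc x - Real.cos (θ₀ x)) ^ 2 + (ss x - Real.sin (θ₀ x)) ^ 2 = 0 := hfx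
  have h1 : cc x - Real.cos (θ₀ x) = 0 := by
    nlinarith [hfx', sq_nonneg (cc x - Real.cos (θ₀ x)), sq_nonneg (ss x - Real.sin (θ₀ x))]
  have h2 : ss x - Real.sin (θ₀ x) = 0 := by
    nlinarith [hfx', sq_nonneg (cc x - Real.cos (θ₀ x)), sq_nonneg (ss x - Real.sin (θ₀ x))]
  have hrne := (hrpos x hx).ne'
  constructor
  · have : cc x = Real.cos (θ₀ x) := by linarith
    rw [hcc] at this
    field_simp at this
    linarith [this]
  · have : ss x = Real.sin (θ₀ x) := by linarith
    rw [hss] at this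
    field_simp at this
    linarith [this]
end
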